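/- Suppose probabilities P(0),...,P(N) ≥ 0 sum to 1 and satisfy the stationarity condition a_j/(1 − ∑_{i=0}^j P(i)) = s for all n+1 ≤ j ≤ N−1 and some constant s > 0, where a_j > 0, P(j) = 0 for j ≤ n, and P(n+1) = 1 − a_{n+1}/s. Then for n+1 < j ≤ N−1, P(j) = (a_{j-1} − a_j)/s, and P(N) = a_{N-1}/s. -/

import Mathlib

theorem AS_probabilities_from_stationarity
    (N n : ℕ) (hn : n + 2 ≤ N)
    (a : ℕ → ℝ) (hapos : ∀ j, j < N → 0 < a j)
    (P : ℕ → ℝ) (hPnonneg : ∀ j, j ≤ N → 0 ≤ P j)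
    (hsum : ∑ j ∈ Finset.range (N + 1), P j = 1)
    (s : ℝ) (hs : 0 < s)
    (hzero : ∀ j, j ≤ n → P j = 0)
    (hinit : P (n + 1) = 1 - a (n + 1) / s)
    (hstat : ∀ j, n + 1 ≤ j → j ≤ N - 1 →
      a j / (1 - ∑ i ∈ Finset.range (j + 1), P i) = s) :
    (∀ j, n + 1 < j → j ≤ N - 1 → P j = (a (j - 1) - a j) / s) ∧
    P N = a (N - 1) / s := by
  have key : ∀ j, n + 1 ≤ j → j ≤ N - 1 →
      1 - ∑ i ∈ Finset.range (j + 1), P i = a j / s := by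
    intro j h1 h2
    have hst := hstat j h1 h2
    set D := 1 - ∑ i ∈ Finset.range (j + 1), P i with hD
    have hDne : D ≠ 0 := by
      intro h
      rw [h, div_zero] at hst
      exact absurd hst.symm (ne_of_gt hs)
    field_simp at hst ⊢
    linarith [hst]
  constructor
  · intro j hj1 hj2
    have hj1' : n + 1 ≤ j - 1 := by omega
    have hj2' : j - 1 ≤ N - 1 := by omega
    have k1 := key (j - 1) hj1' hj2'
    have k2 := key j (by omega) hj2
    have hji : j - 1 + 1 = j := by omega
    rw [hji] at k1
    have hsplit : ∑ i ∈ Finset.range (j + 1), P i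
        = ∑ i ∈ Finset.range j, P i + P j := Finset.sum_range_succ P j
    rw [hsplit] at k2
    rw [sub_div]
    linarith
  · have k := key (N - 1) (by omega) le_rfl
    have hNi : N - 1 + 1 = N := by omega
    rw [hNi] at k
    have hsplit : ∑ i ∈ Finset.range (N + 1), P i
        = ∑ i ∈ Finset.range N, P i + P N := Finset.sum_range_succ P N
    rw [hsplit] at hsum
    linarith
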